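/- Let L be a finite lattice and let p, q be prime intervals of L with 1_q ≤ 1_p, 0_p ∧ 1_q ≤ 0_q, and p perspective down onto [0_q, 1_p ∨ 0_q], where p is not perspective to q and p ≠ q. Then the set {0_p ∧ 1_q, 0_p, 0_q, 1_q, 0_p ∨ 0_q} is a five-element sublattice of L isomorphic to N_5. -/
import Mathlib


universe u

/-- A congruence of a lattice: an equivalence relation compatible with `⊔` and `⊓`. -/
structure LatCon (L : Type u) [Lattice L] : Type u where
  rel : L → L → Prop
  refl : ∀ a, rel a a
  symm : ∀ {a b}, rel a b → rel b a
  trans : ∀ {a b c}, rel a b → rel b c → rel a c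
  sup_comp : ∀ {a b c d}, rel a b → rel c d → rel (a ⊔ c) (b ⊔ d)
  inf_comp : ∀ {a b c d}, rel a b → rel c d → rel (a ⊓ c) (b ⊓ d)

variable {L : Type u} [Lattice L]

/-- The inclusion order on congruences. -/
def LatCon.le (α β : LatCon L) : Prop := ∀ a b : L, α.rel a b → β.rel a b

/-- The principal congruence `con(x, y)`: the smallest congruence collapsing `x` and `y`. -/
def conOf (x y : L) : LatCon L where
  rel a b := ∀ θ : LatCon L, θ.rel x y → θ.rel a b
  refl a := fun θ _ => θ.refl a
  symm h := fun θ hθ => θ.symm (h θ hθ)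
  trans h₁ h₂ := fun θ hθ => θ.trans (h₁ θ hθ) (h₂ θ hθ)
  sup_comp h₁ h₂ := fun θ hθ => θ.sup_comp (h₁ θ hθ) (h₂ θ hθ)
  inf_comp h₁ h₂ := fun θ hθ => θ.inf_comp (h₁ θ hθ) (h₂ θ hθ)

/-- The bottom congruence: equality. -/
def conBot : LatCon L where
  rel a b := a = b
  refl _ := rfl
  symm h := h.symm
  trans h₁ h₂ := h₁.trans h₂
  sup_comp h₁ h₂ := by rw [h₁, h₂]
  inf_comp h₁ h₂ := by rw [h₁, h₂]

/-- The join of two congruences: the smallest congruence containing both. -/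
def conJoin (α β : LatCon L) : LatCon L where
  rel a b := ∀ θ : LatCon L, α.le θ → β.le θ → θ.rel a b
  refl a := fun θ _ _ => θ.refl a
  symm h := fun θ hα hβ => θ.symm (h θ hα hβ)
  trans h₁ h₂ := fun θ hα hβ => θ.trans (h₁ θ hα hβ) (h₂ θ hα hβ)
  sup_comp h₁ h₂ := fun θ hα hβ => θ.sup_comp (h₁ θ hα hβ) (h₂ θ hα hβ)
  inf_comp h₁ h₂ := fun θ hα hβ => θ.inf_comp (h₁ θ hα hβ) (h₂ θ hα hβ)

/-- A congruence is join-irreducible if it is not the bottom congruence and is not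
the join of two congruences unless it equals one of them. -/
def LatCon.JoinIrreducible (θ : LatCon L) : Prop :=
  θ ≠ conBot ∧ ∀ α β : LatCon L, θ = conJoin α β → θ = α ∨ θ = β

/-- `p` is a prime interval: its bottom is covered by its top. -/
def IsPrimeInt (p : L × L) : Prop := p.1 ⋖ p.2

/-- `[a, b]` is perspective up to `[c, d]`: `b ⊔ c = d` and `a = b ⊓ c`. -/
def PerspUp (p q : L × L) : Prop := p.2 ⊔ q.1 = q.2 ∧ p.1 = p.2 ⊓ q.1

/-- `[a, b]` is perspective down to `[c, d]`: `a ⊓ d = c` and `a ⊔ d = b`. -/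
def PerspDn (p q : L × L) : Prop := p.1 ⊓ q.2 = q.1 ∧ p.1 ⊔ q.2 = p.2

/-- Perspectivity: up or down. -/
def Persp (p q : L × L) : Prop := PerspUp p q ∨ PerspDn p q

/-- `p` is prime-perspective down to `q`: `1_q ≤ 1_p`, `p` is perspective down onto the
interval `[0_p ⊓ 1_q, 1_q]` (i.e. `0_p ⊔ 1_q = 1_p`), and `q ⊆ [0_p ⊓ 1_q, 1_q]`
(i.e. `0_p ⊓ 1_q ≤ 0_q`). -/
def PPerspDn (p q : L × L) : Prop := q.2 ≤ p.2 ∧ p.1 ⊔ q.2 = p.2 ∧ p.1 ⊓ q.2 ≤ q.1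

/-- `p` is prime-perspective up to `q`: the dual of `PPerspDn`. -/
def PPerspUp (p q : L × L) : Prop := p.1 ≤ q.1 ∧ p.2 ⊓ q.1 = p.1 ∧ q.2 ≤ p.2 ⊔ q.1

/-- Prime-perspectivity: up or down. -/
def PPersp (p q : L × L) : Prop := PPerspUp p q ∨ PPerspDn p q

/-- Prime-projectivity: the reflexive-transitive extension of prime-perspectivity. -/
def PProj : (L × L) → (L × L) → Prop := Relation.ReflTransGen PPersp

/-- `q` is collapsed by `con(p)`. -/
def Collapses (p q : L × L) : Prop := (conOf p.1 p.2).rel q.1 q.2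

/-- `{e, a, b, c, t}` forms a pentagon (`N₅`) sublattice:
`e < a < t`, `e < b < c < t`, with `a` a complement of both `b` and `c`. -/
def IsN5 (e a b c t : L) : Prop :=
  e < a ∧ a < t ∧ e < b ∧ b < c ∧ c < t ∧
  a ⊓ b = e ∧ a ⊓ c = e ∧ a ⊔ b = t ∧ a ⊔ c = t

/-- `{e, a, b, t}` forms a sublattice isomorphic to the four-element Boolean lattice. -/
def IsBool4 (e a b t : L) : Prop :=
  a ⊓ b = e ∧ a ⊔ b = t ∧ ¬ a ≤ b ∧ ¬ b ≤ a

/-- `{e, a, b, t}` is a covering square `C₂²`. -/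
def IsCovSquare (e a b t : L) : Prop :=
  a ⊓ b = e ∧ a ⊔ b = t ∧ e ⋖ a ∧ e ⋖ b ∧ a ⋖ t ∧ b ⋖ t

/-- `{e, a, b, c, t}` forms a diamond (`M₃`) sublattice. -/
def IsM3 (e a b c t : L) : Prop :=
  a ⊓ b = e ∧ a ⊓ c = e ∧ b ⊓ c = e ∧ a ⊔ b = t ∧ a ⊔ c = t ∧ b ⊔ c = t ∧
  e < a ∧ e < b ∧ e < c ∧ a ≠ b ∧ a ≠ c ∧ b ≠ c

/-- A lattice is slim if it contains no `M₃` sublattice. -/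
def Slim (L : Type u) [Lattice L] : Prop := ¬ ∃ e a b c t : L, IsM3 e a b c t

/-- (Upper) semimodularity: `a ⊓ b ⋖ a` implies `b ⋖ a ⊔ b`. -/
def Semimodular (L : Type u) [Lattice L] : Prop := ∀ a b : L, a ⊓ b ⋖ a → b ⋖ a ⊔ b

/-- A planar diagram of a finite lattice: every element gets a position in the plane,
the vertical coordinate is strictly order-preserving, distinct elements get distinct
positions, and the straight-line edges of distinct covering pairs do not cross. -/
structure Diagram (L : Type u) [Lattice L] where
  x : L → ℚ
  y : L → ℚ
  y_strictMono : ∀ {a b : L}, a < b → y a < y b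
  inj : Function.Injective fun v => (x v, y v)
  planar : ∀ a b c d : L, a ⋖ b → c ⋖ d →
    (openSegment ℚ ((x a, y a) : ℚ × ℚ) (x b, y b) ∩
      openSegment ℚ ((x c, y c) : ℚ × ℚ) (x d, y d)).Nonempty → a = c ∧ b = d

/-- In the diagram `D`, the prime interval `p` swings to the prime interval `q`:
they share the same top, that top covers at least three elements, and `0_q` is
neither the left-most nor the right-most lower cover of the common top. -/
def Swing (D : Diagram L) (p q : L × L) : Prop :=
  p.2 = q.2 ∧ 3 ≤ Nat.card {z : L // z ⋖ p.2} ∧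
  (¬ ∀ z : L, z ⋖ p.2 → D.x q.1 ≤ D.x z) ∧ (¬ ∀ z : L, z ⋖ p.2 → D.x z ≤ D.x q.1)

/-- The conclusion of the Swing Lemma for prime intervals `p`, `q`: there are pairwise
distinct prime intervals `r = r₀, …, rₙ = q` with `p` perspective up to `r` and each
`rᵢ` perspective down to, or swinging to, `r_{i+1}`. -/
def SwingSeq (D : Diagram L) (p q : L × L) : Prop :=
  ∃ (n : ℕ) (r : Fin (n + 1) → L × L), Function.Injective r ∧
    (∀ i, IsPrimeInt (r i)) ∧ PerspUp p (r 0) ∧ r (Fin.last n) = q ∧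
    ∀ i : Fin n, PerspDn (r i.castSucc) (r i.succ) ∨ Swing D (r i.castSucc) (r i.succ)

/-- The Swing Lemma holds for the lattice `L` with planar diagram `D`. -/
def SwingLemmaHolds (L : Type u) [Lattice L] (D : Diagram L) : Prop :=
  ∀ p q : L × L, IsPrimeInt p → IsPrimeInt q → p ≠ q →
    (Collapses p q ↔ SwingSeq D p q)

/-- A corner of a finite lattice: a doubly irreducible element, distinct from the
extremes, whose unique upper cover covers exactly two elements and whose unique
lower cover is covered by exactly two elements. -/
def IsLatCorner (c : L) : Prop :=
  ¬ IsMin c ∧ ¬ IsMax c ∧ (∃! u : L, c ⋖ u) ∧ (∃! v : L, v ⋖ c) ∧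
  (∀ u : L, c ⋖ u → Nat.card {z : L // z ⋖ u} = 2) ∧
  (∀ v : L, v ⋖ c → Nat.card {z : L // v ⋖ z} = 2)

theorem pperspDn_N5 [Fintype L] (p q : L × L) (hp : IsPrimeInt p)
    (hq : IsPrimeInt q) (h1 : q.2 ≤ p.2) (h2 : p.1 ⊓ q.2 ≤ q.1) (h3 : p.1 ⊔ q.2 = p.2)
    (hnp : ¬ Persp p q) (hne : p ≠ q) :
    IsN5 (p.1 ⊓ q.2) p.1 q.1 q.2 (p.1 ⊔ q.1) := by
  obtain ⟨a, b⟩ := p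
  obtain ⟨c, d⟩ := q
  simp only [IsPrimeInt] at hp hq
  simp only at h1 h2 h3 ⊢
  -- a ⊓ d < c : otherwise PerspDn p q
  have hadc : a ⊓ d < c := by
    rcases lt_or_eq_of_le h2 with h | h
    · exact h
    · exact absurd (Or.inr ⟨h, h3⟩) hnp
  -- d < b
  have hdb : d < b := by
    rcases lt_or_eq_of_le h1 with h | h
    · exact h
    · exfalso
      subst h
      have hac : a ≤ c := le_trans (le_of_eq (inf_eq_left.mpr hp.le).symm) h2
      rcases (hp.eq_or_eq hac hq.le) with h' | h'
      · exact hne (by simp [h'])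
      · exact hq.lt.ne h'
  -- a ⊓ d < a
  have hada : a ⊓ d < a := by
    rcases lt_or_eq_of_le (inf_le_left : a ⊓ d ≤ a) with h | h
    · exact h
    · exfalso
      have : a ≤ d := inf_eq_left.mp h
      exact hdb.ne (le_antisymm hdb.le (h3 ▸ sup_le this le_rfl))
  -- a ⊔ c = b
  have hacb : a ⊔ c = b := by
    have hle : a ⊔ c ≤ b := sup_le hp.le (le_trans hq.le h1)
    rcases hp.eq_or_eq (le_sup_left : a ≤ a ⊔ c) hle with h | h
    · exfalso
      have hca : c ≤ a := sup_eq_left.mp h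
      exact hadc.ne (le_antisymm h2 (le_inf hca hq.le))
    · exact h
  -- a ⊓ c = a ⊓ d
  have hacad : a ⊓ c = a ⊓ d :=
    le_antisymm (inf_le_inf_left a hq.le) (le_inf inf_le_left h2)
  refine ⟨hada, ?_, hadc, hq.lt, ?_, hacad, rfl, rfl, ?_⟩
  · rw [hacb]; exact hp.lt
  · rw [hacb]; exact hdb
  · rw [hacb]; exact h3
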